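/- With μ, Δ_n^ℓ, ℘_n^ℓ as above, the identity ℘_n^{ℓ−1}(x)·Δ_n^{ℓ+1} + x·Δ_{n+1}^ℓ·℘_{n−1}^ℓ(x) = ℘_n^ℓ(x)·Δ_n^ℓ holds in F[x]. -/

import Mathlib

/-- Shifted Toeplitz determinant `Δ_n^ℓ = det [μ(ℓ + j − i)]_{i,j = 1..n}`, with `Δ_0^ℓ = 1`. -/
noncomputable def Delta {F : Type*} [Field F] (μ : ℤ → F) (n : ℕ) (ℓ : ℤ) : F :=
  (Matrix.of fun i j : Fin n => μ (ℓ + (j : ℤ) - (i : ℤ))).det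

/-- Bordered shifted Toeplitz determinant `℘_n^ℓ(x)`: the (n+1)×(n+1) determinant whose
rows `i = 1..n` are `(μ_{ℓ−i+1}, …, μ_{ℓ−i+1+n})` and whose last row is `(1, x, …, xⁿ)`. -/
noncomputable def wp {F : Type*} [Field F] (μ : ℤ → F) (n : ℕ) (ℓ : ℤ) : Polynomial F :=
  (Matrix.of fun i j : Fin (n + 1) =>
    if (i : ℕ) < n then Polynomial.C (μ (ℓ - (i : ℤ) + (j : ℤ))) else Polynomial.X ^ (j : ℕ)).det

open Matrix Polynomial Finset

lemma cramer_aux {R : Type*} [CommRing R] {m : ℕ} (w : Fin (m+1) → (Fin m → R)) (k : Fin m) :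
    ∑ i : Fin (m+1), (-1)^(i:ℕ) * (Matrix.of fun p q => w (i.succAbove p) q).det * w i k = 0 := by
  set A : Matrix (Fin (m+1)) (Fin (m+1)) R :=
    Matrix.of fun i j => (Fin.cons (w i k) (w i) : Fin (m+1) → R) j with hA
  have h0 : A.det = 0 := by
    apply Matrix.det_zero_of_column_eq (i := 0) (j := k.succ) (Fin.succ_ne_zero k).symm
    intro r
    simp [hA]
  rw [Matrix.det_succ_column_zero] at h0
  rw [← h0]
  refine Finset.sum_congr rfl fun i _ => ?_
  have hsub : A.submatrix i.succAbove Fin.succ = Matrix.of fun p q => w (i.succAbove p) q := by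
    ext p q
    simp [hA]
  have h00 : A i 0 = w i k := by simp [hA]
  rw [hsub, h00]
  ring

lemma pluecker {R : Type*} [CommRing R] {n : ℕ} (S : Fin n → (Fin (n+2) → R))
    (a b c d : Fin (n+2) → R) :
    (Matrix.of (Fin.snoc (Fin.snoc S a) b)).det * (Matrix.of (Fin.snoc (Fin.snoc S c) d)).det
      - (Matrix.of (Fin.snoc (Fin.snoc S a) c)).det * (Matrix.of (Fin.snoc (Fin.snoc S b) d)).det
      + (Matrix.of (Fin.snoc (Fin.snoc S a) d)).det * (Matrix.of (Fin.snoc (Fin.snoc S b) c)).det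
      = 0 := by
  classical
  set w : Fin (n+3) → (Fin (n+2) → R) := Fin.snoc (Fin.snoc (Fin.snoc S a) b) c with hw
  set coef : Fin (n+3) → R :=
    fun i => (-1)^(i:ℕ) * (Matrix.of fun p q => w (i.succAbove p) q).det with hcoef
  have hsum : (∑ i : Fin (n+3), coef i • w i) = 0 := by
    funext k
    have := cramer_aux w k
    simpa [coef, Finset.sum_apply] using this
  set p : Fin (n+2) := Fin.castSucc (Fin.last n) with hp
  set base : Matrix (Fin (n+2)) (Fin (n+2)) R :=
    Matrix.of (Fin.snoc (Fin.snoc S (fun _ => (0:R))) d) with hbase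
  have hupd : ∀ x : Fin (n+2) → R,
      base.updateRow p x = Matrix.of (Fin.snoc (Fin.snoc S x) d) := by
    intro x
    ext i j
    refine Fin.lastCases ?_ (fun q => ?_) i
    · rw [Matrix.updateRow_ne (by simp [hp, Fin.ext_iff])]
      simp [Fin.snoc_last, base]
    · refine Fin.lastCases ?_ (fun r => ?_) q
      · rw [show Fin.castSucc (Fin.last n) = p from rfl, Matrix.updateRow_self]
        simp [hp, Fin.snoc_castSucc, Fin.snoc_last]
      · have hne : Fin.castSucc (Fin.castSucc r) ≠ p := by
          have := r.isLt
          simp [hp, Fin.ext_iff]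
          omega
        rw [Matrix.updateRow_ne hne]
        simp [Fin.snoc_castSucc, base]
  -- linearity of det in row p
  have hlin : ∀ (s : Finset (Fin (n+3))),
      (base.updateRow p (∑ i ∈ s, coef i • w i)).det
        = ∑ i ∈ s, coef i * (base.updateRow p (w i)).det := by
    intro s
    induction s using Finset.induction_on with
    | empty =>
        simp only [Finset.sum_empty]
        exact Matrix.det_eq_zero_of_row_eq_zero p (by simp)
    | @insert k s hk ih =>
        rw [Finset.sum_insert hk, Matrix.det_updateRow_add, Matrix.det_updateRow_smul, ih,
          Finset.sum_insert hk]
  have hmain : (0:R) = ∑ i : Fin (n+3), coef i * (base.updateRow p (w i)).det := by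
    rw [← hlin Finset.univ, hsum]
    exact (Matrix.det_eq_zero_of_row_eq_zero p (by simp)).symm
  -- evaluate the rows dropped
  have hFd : ∀ x : Fin (n+2) → R,
      (base.updateRow p x).det = (Matrix.of (Fin.snoc (Fin.snoc S x) d)).det := by
    intro x; rw [hupd]
  simp_rw [hFd] at hmain
  -- identify the three dropped-row matrices
  have e1 : (Matrix.of fun p q => w ((Fin.last (n+2)).succAbove p) q)
      = Matrix.of (Fin.snoc (Fin.snoc S a) b) := by
    ext p q
    simp [hw, Fin.succAbove_last, Fin.snoc_castSucc]
  have e2 : (Matrix.of fun p q => w ((Fin.castSucc (Fin.last (n+1))).succAbove p) q)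
      = Matrix.of (Fin.snoc (Fin.snoc S a) c) := by
    ext p q
    simp only [Matrix.of_apply]
    refine Fin.lastCases ?_ (fun r => ?_) p
    · rw [Fin.succAbove_of_le_castSucc _ _ (le_refl _)]
      simp [hw, Fin.succ_last, Fin.snoc_last]
    · rw [Fin.succAbove_of_castSucc_lt _ _ (by simp [Fin.lt_def, r.isLt])]
      simp [hw, Fin.snoc_castSucc]
  have e3 : (Matrix.of fun p q =>
        w ((Fin.castSucc (Fin.castSucc (Fin.last n))).succAbove p) q)
      = Matrix.of (Fin.snoc (Fin.snoc S b) c) := by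
    ext p q
    simp only [Matrix.of_apply]
    refine Fin.lastCases ?_ (fun r => ?_) p
    · rw [Fin.succAbove_of_le_castSucc _ _ (by simp [Fin.le_def])]
      simp [hw, Fin.succ_last, Fin.snoc_last]
    · refine Fin.lastCases ?_ (fun s => ?_) r
      · rw [Fin.succAbove_of_le_castSucc _ _ (by simp [Fin.le_def])]
        have hs : Fin.succ (Fin.castSucc (Fin.last n)) = Fin.castSucc (Fin.last (n+1)) := by
          simp [Fin.ext_iff]
        rw [hs]
        simp [hw, Fin.snoc_castSucc, Fin.snoc_last]
      · rw [Fin.succAbove_of_castSucc_lt _ _ (by simp [Fin.lt_def, s.isLt])]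
        simp [hw, Fin.snoc_castSucc]
  have hzero : ∀ j : Fin n,
      (Matrix.of (Fin.snoc (Fin.snoc S (S j)) d)).det = 0 := by
    intro j
    apply Matrix.det_zero_of_row_eq (M := Matrix.of (Fin.snoc (Fin.snoc S (S j)) d))
      (i := Fin.castSucc (Fin.castSucc j)) (j := p)
    · have := j.isLt
      simp [hp, Fin.ext_iff]
      omega
    · funext q
      simp [hp, Fin.snoc_castSucc, Fin.snoc_last]
  rw [Fin.sum_univ_castSucc] at hmain
  rw [Fin.sum_univ_castSucc] at hmain
  rw [Fin.sum_univ_castSucc] at hmain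
  simp only [hcoef, hw, Fin.snoc_castSucc, Fin.snoc_last, Fin.coe_castSucc, Fin.val_last]
    at hmain
  rw [e1] at hmain
  rw [e2] at hmain
  rw [e3] at hmain
  simp only [hzero, mul_zero, zero_mul, Finset.sum_const_zero, zero_add] at hmain
  have key : (-1:R)^n *
      ((Matrix.of (Fin.snoc (Fin.snoc S a) b)).det * (Matrix.of (Fin.snoc (Fin.snoc S c) d)).det
      - (Matrix.of (Fin.snoc (Fin.snoc S a) c)).det * (Matrix.of (Fin.snoc (Fin.snoc S b) d)).det
      + (Matrix.of (Fin.snoc (Fin.snoc S a) d)).det * (Matrix.of (Fin.snoc (Fin.snoc S b) c)).det)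
      = 0 := by
    linear_combination -hmain
  have h1 : ((-1:R)^n) * ((-1:R)^n) = 1 := by rw [← mul_pow]; norm_num
  have h2 := congrArg (fun z => (-1:R)^n * z) key
  simp only [← mul_assoc, h1, one_mul, mul_zero] at h2
  exact h2

lemma det_snoc_rotate {R : Type*} [CommRing R] {n : ℕ} (S : Fin n → (Fin (n+2) → R))
    (x y : Fin (n+2) → R) :
    (Matrix.of (Fin.snoc (Fin.snoc S x) y)).det
      = (-1)^n * (Matrix.of (Fin.snoc (Fin.cons x S) y)).det := by
  set σ : Equiv.Perm (Fin (n+2)) := Fin.cycleRange (Fin.castSucc (Fin.last n)) with hσ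
  have hM : (Matrix.of (Fin.snoc (Fin.snoc S x) y))
      = (Matrix.of (Fin.snoc (Fin.cons x S) y)).submatrix σ id := by
    ext i j
    simp only [Matrix.submatrix_apply, id_eq, Matrix.of_apply]
    refine Fin.lastCases ?_ (fun q => ?_) i
    · have : σ (Fin.last (n+1)) = Fin.last (n+1) := by
        apply Fin.cycleRange_of_gt
        simp [Fin.lt_def]
      rw [this]
      simp [Fin.snoc_last]
    · refine Fin.lastCases ?_ (fun r => ?_) q
      · have : σ (Fin.castSucc (Fin.last n)) = 0 := Fin.cycleRange_self _
        rw [this]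
        have h0 : (0 : Fin (n+2)) = Fin.castSucc (0 : Fin (n+1)) := by simp
        rw [Fin.snoc_castSucc, Fin.snoc_last, h0, Fin.snoc_castSucc, Fin.cons_zero]
      · have hlt : Fin.castSucc (Fin.castSucc r) < Fin.castSucc (Fin.last n) := by
          simp [Fin.lt_def, r.isLt]
        have : σ (Fin.castSucc (Fin.castSucc r)) = Fin.castSucc (Fin.castSucc r) + 1 :=
          Fin.cycleRange_of_lt hlt
        rw [this]
        have he : Fin.castSucc (Fin.castSucc r) + 1 = Fin.castSucc (Fin.succ r) := by
          have h1 : (Fin.castSucc (Fin.castSucc r)) < Fin.last (n+1) := by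
            simp [Fin.lt_def]
          simp [Fin.ext_iff, Fin.val_add_one_of_lt h1]
        rw [he, Fin.snoc_castSucc, Fin.snoc_castSucc, Fin.snoc_castSucc, Fin.cons_succ]
  rw [hM, Matrix.det_permute, hσ, Fin.sign_cycleRange]
  simp
lemma det_snoc_unit {R : Type*} [CommRing R] {n : ℕ} (g : Fin (n+1) → (Fin (n+2) → R)) :
    (Matrix.of (Fin.snoc g (fun c : Fin (n+2) => if c = 0 then (1:R) else 0))).det
      = (-1)^(n+1) * (Matrix.of fun (i : Fin (n+1)) (j : Fin (n+1)) => g i (Fin.succ j)).det := by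
  rw [Matrix.det_succ_row _ (Fin.last (n+1))]
  rw [Finset.sum_eq_single 0]
  · have h1 : (Matrix.of (Fin.snoc g (fun c : Fin (n+2) => if c = 0 then (1:R) else 0)))
        (Fin.last (n+1)) 0 = 1 := by simp [Fin.snoc_last]
    rw [h1]
    have h2 : (Matrix.of (Fin.snoc g (fun c : Fin (n+2) => if c = 0 then (1:R) else 0))).submatrix
        (Fin.last (n+1)).succAbove (0 : Fin (n+2)).succAbove
        = Matrix.of fun (i : Fin (n+1)) (j : Fin (n+1)) => g i (Fin.succ j) := by
      ext p q
      simp [Fin.succAbove_last, Fin.succAbove_zero, Fin.snoc_castSucc]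
    rw [h2]
    simp [Fin.val_last]
  · intro j _ hj
    have : (Matrix.of (Fin.snoc g (fun c : Fin (n+2) => if c = 0 then (1:R) else 0)))
        (Fin.last (n+1)) j = 0 := by simp [Fin.snoc_last, hj]
    rw [this]
    ring
  · intro h
    simp at h


section Evals

variable {F : Type*} [Field F] (μ : ℤ → F) (n : ℕ) (ℓ : ℤ)

noncomputable def Srow : Fin n → (Fin (n+2) → Polynomial F) :=
  fun i c => Polynomial.C (μ (ℓ - 1 - (i:ℤ) + (c:ℤ)))

noncomputable def arow : Fin (n+2) → Polynomial F := fun c => Polynomial.C (μ (ℓ + (c:ℤ)))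

noncomputable def brow : Fin (n+2) → Polynomial F :=
  fun c => Polynomial.C (μ (ℓ - 1 - (n:ℤ) + (c:ℤ)))

noncomputable def crow : Fin (n+2) → Polynomial F := fun c => Polynomial.X ^ (c:ℕ)

noncomputable def drow : Fin (n+2) → Polynomial F := fun c => if c = 0 then 1 else 0

lemma drow_eq : drow (F := F) n = fun c : Fin (n+2) => if c = 0 then (1 : Polynomial F) else 0 :=
  rfl

lemma E6 : (Matrix.of (Fin.snoc (Fin.snoc (Srow μ n ℓ) (brow μ n ℓ)) (crow (F := F) n))).det
    = wp μ (n+1) (ℓ-1) := by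
  rw [wp]
  congr 1
  ext i j
  refine Fin.lastCases ?_ (fun q => ?_) i
  · rw [Matrix.of_apply, Fin.snoc_last, Matrix.of_apply, if_neg (by simp)]
    rfl
  · rw [Matrix.of_apply, Fin.snoc_castSucc, Matrix.of_apply,
      if_pos (by simpa using q.isLt)]
    refine Fin.lastCases ?_ (fun r => ?_) q
    · rw [Fin.snoc_last, brow]
      congr 2
    · rw [Fin.snoc_castSucc, Srow]
      congr 2

lemma E3 : (Matrix.of (Fin.snoc (Fin.snoc (Srow μ n ℓ) (arow μ n ℓ)) (crow (F := F) n))).det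
    = (-1)^n * wp μ (n+1) ℓ := by
  rw [det_snoc_rotate, wp]
  congr 1
  congr 1
  ext i j
  refine Fin.lastCases ?_ (fun q => ?_) i
  · rw [Matrix.of_apply, Fin.snoc_last, Matrix.of_apply, if_neg (by simp)]
    rfl
  · rw [Matrix.of_apply, Fin.snoc_castSucc, Matrix.of_apply,
      if_pos (by simpa using q.isLt)]
    refine Fin.cases ?_ (fun r => ?_) q
    · rw [Fin.cons_zero]
      simp only [arow]
      congr 2
      simp
    · rw [Fin.cons_succ]
      simp only [Srow]
      congr 2
      simp only [Fin.coe_castSucc, Fin.val_succ]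
      push_cast
      ring

lemma E1 : (Matrix.of (Fin.snoc (Fin.snoc (Srow μ n ℓ) (arow μ n ℓ)) (brow μ n ℓ))).det
    = (-1)^n * Polynomial.C (Delta μ (n+2) ℓ) := by
  rw [det_snoc_rotate, Delta, RingHom.map_det]
  congr 1
  congr 1
  ext i j
  rw [RingHom.mapMatrix_apply, Matrix.map_apply, Matrix.of_apply, Matrix.of_apply]
  refine Fin.lastCases ?_ (fun q => ?_) i
  · rw [Fin.snoc_last, brow]
    congr 2
    simp only [Fin.val_last]
    push_cast
    ring
  · rw [Fin.snoc_castSucc]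
    refine Fin.cases ?_ (fun r => ?_) q
    · rw [Fin.cons_zero]
      simp only [arow]
      congr 2
      simp
    · rw [Fin.cons_succ]
      simp only [Srow]
      congr 2
      simp only [Fin.coe_castSucc, Fin.val_succ]
      push_cast
      ring

lemma E4 : (Matrix.of (Fin.snoc (Fin.snoc (Srow μ n ℓ) (brow μ n ℓ)) (drow (F := F) n))).det
    = (-1)^(n+1) * Polynomial.C (Delta μ (n+1) ℓ) := by
  rw [drow_eq]
  rw [det_snoc_unit, Delta, RingHom.map_det]
  congr 1
  congr 1
  ext i j
  rw [RingHom.mapMatrix_apply, Matrix.map_apply, Matrix.of_apply, Matrix.of_apply]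
  refine Fin.lastCases ?_ (fun q => ?_) i
  · rw [Fin.snoc_last, brow]
    congr 2
    simp only [Fin.val_last, Fin.val_succ]
    push_cast
    ring
  · rw [Fin.snoc_castSucc, Srow]
    congr 2
    simp only [Fin.coe_castSucc, Fin.val_succ]
    push_cast
    ring

lemma E5 : (Matrix.of (Fin.snoc (Fin.snoc (Srow μ n ℓ) (arow μ n ℓ)) (drow (F := F) n))).det
    = (-1)^n * ((-1)^(n+1) * Polynomial.C (Delta μ (n+1) (ℓ+1))) := by
  rw [det_snoc_rotate]
  rw [drow_eq]
  rw [det_snoc_unit, Delta, RingHom.map_det]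
  congr 1
  congr 1
  congr 1
  ext i j
  rw [RingHom.mapMatrix_apply, Matrix.map_apply, Matrix.of_apply, Matrix.of_apply]
  refine Fin.cases ?_ (fun r => ?_) i
  · rw [Fin.cons_zero]
    simp only [arow]
    congr 2
    simp only [Fin.val_succ, Fin.val_zero]
    push_cast
    ring
  · rw [Fin.cons_succ]
    simp only [Srow]
    congr 2
    simp only [Fin.val_succ]
    push_cast
    ring

lemma E2 : (Matrix.of (Fin.snoc (Fin.snoc (Srow μ n ℓ) (crow (F := F) n)) (drow (F := F) n))).det
    = (-1)^(n+1) * (Polynomial.X * wp μ n ℓ) := by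
  rw [drow_eq]
  rw [det_snoc_unit]
  congr 1
  have hW : (Matrix.of fun (i : Fin (n+1)) (j : Fin (n+1)) =>
        (Fin.snoc (Srow μ n ℓ) (crow (F := F) n) : Fin (n+1) → Fin (n+2) → Polynomial F)
          i (Fin.succ j))
      = (Matrix.of fun i j : Fin (n + 1) =>
          if (i : ℕ) < n then Polynomial.C (μ (ℓ - (i : ℤ) + (j : ℤ))) else Polynomial.X ^ (j : ℕ)
        ).updateRow (Fin.last n)
          ((Polynomial.X : Polynomial F) • fun j : Fin (n+1) => (Polynomial.X : Polynomial F) ^ (j:ℕ)) := by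
    ext i j
    refine Fin.lastCases ?_ (fun r => ?_) i
    · rw [Matrix.updateRow_self, Matrix.of_apply, Fin.snoc_last, crow]
      simp [pow_succ']
    · rw [Matrix.updateRow_ne (Fin.castSucc_lt_last r).ne, Matrix.of_apply, Fin.snoc_castSucc,
        Matrix.of_apply, if_pos (by simpa using r.isLt), Srow]
      congr 2
      simp only [Fin.coe_castSucc, Fin.val_succ]
      push_cast
      ring
  rw [hW, Matrix.det_updateRow_smul, wp]
  congr 1
  rw [show (fun j : Fin (n+1) => Polynomial.X ^ (j:ℕ))
      = (Matrix.of fun i j : Fin (n + 1) =>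
          if (i : ℕ) < n then Polynomial.C (μ (ℓ - (i : ℤ) + (j : ℤ))) else Polynomial.X ^ (j : ℕ)
        ) (Fin.last n) from by ext j; simp]
  rw [Matrix.updateRow_eq_self]

end Evals


/-- `℘_n^{ℓ−1}(x)·Δ_n^{ℓ+1} + x·Δ_{n+1}^ℓ·℘_{n−1}^ℓ(x) = ℘_n^ℓ(x)·Δ_n^ℓ` in `F[x]`
(stated for `n ≥ 1`, i.e. with `n` replaced by `n+1`). -/
theorem wp_identity_due {F : Type*} [Field F] (μ : ℤ → F) (n : ℕ) (ℓ : ℤ) :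
    wp μ (n + 1) (ℓ - 1) * Polynomial.C (Delta μ (n + 1) (ℓ + 1)) +
      Polynomial.X * Polynomial.C (Delta μ (n + 2) ℓ) * wp μ n ℓ =
    wp μ (n + 1) ℓ * Polynomial.C (Delta μ (n + 1) ℓ) := by
  have hP := pluecker (Srow μ n ℓ) (arow μ n ℓ) (brow μ n ℓ) (crow (F := F) n)
    (drow (F := F) n)
  rw [E1 μ n ℓ, E2 μ n ℓ, E3 μ n ℓ, E4 μ n ℓ, E5 μ n ℓ, E6 μ n ℓ] at hP
  have h1 : ((-1 : Polynomial F)^n) * ((-1 : Polynomial F)^n) = 1 := by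
    rw [← mul_pow]; norm_num
  simp only [pow_succ] at hP
  linear_combination (-1 : Polynomial F) * hP -
    (wp μ (n + 1) (ℓ - 1) * Polynomial.C (Delta μ (n + 1) (ℓ + 1)) +
      Polynomial.X * Polynomial.C (Delta μ (n + 2) ℓ) * wp μ n ℓ -
      wp μ (n + 1) ℓ * Polynomial.C (Delta μ (n + 1) ℓ)) * h1
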